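/- Under the decomposition above, ℳ^𝒟_α(g₁,g₂)(x) is comparable (with dimensional constants depending on n and α) to ∑_{k,j} (|Q_j^k|^{-(2-α/n)} ∫_{Q_j^k} g₁ ∫_{Q_j^k} g₂) · 1_{E(Q_j^k)}(x) for a.e. x with ℳ^𝒟_α(g₁,g₂)(x) > 0, where E(Q_j^k) = Q_j^k \ Ω_{k+1}. -/

import Mathlib

open MeasureTheory ENNReal Set
open scoped BigOperators

noncomputable section

abbrev Rn (n : ℕ) := Fin n → ℝ

/-- An axis-parallel half-open cube with corner `c` and side length `l`. -/
def cube {n : ℕ} (c : Rn n) (l : ℝ) : Set (Rn n) :=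
  {x | ∀ i, c i ≤ x i ∧ x i < c i + l}

/-- `σ(Q) = ∫_Q σ dx`. -/
def wtI {n : ℕ} (σ : Rn n → ℝ≥0∞) (Q : Set (Rn n)) : ℝ≥0∞ := ∫⁻ x in Q, σ x

/-- `𝔼^σ_Q f = σ(Q)⁻¹ ∫_Q f σ`. -/
def avgE {n : ℕ} (σ f : Rn n → ℝ≥0∞) (Q : Set (Rn n)) : ℝ≥0∞ :=
  (wtI σ Q)⁻¹ * ∫⁻ x in Q, f x * σ x

/-- The cube `2^{-k}([0,1)ⁿ + m + (-1)^k t)` of the shifted dyadic grid. -/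
def gridCube (n : ℕ) (k : ℤ) (m : Fin n → ℤ) (t : Fin n → ℝ) : Set (Rn n) :=
  {x | ∀ i, (2:ℝ) ^ (-k) * ((m i : ℝ) + (-1:ℝ) ^ k * t i) ≤ x i ∧
       x i < (2:ℝ) ^ (-k) * ((m i : ℝ) + (-1:ℝ) ^ k * t i + 1)}

/-- The shifted dyadic grid `𝒟_t`. -/
def shiftedGrid (n : ℕ) (t : Fin n → ℝ) : Set (Set (Rn n)) :=
  {Q | ∃ (k : ℤ) (m : Fin n → ℤ), Q = gridCube n k m t}

/-- Abstract dyadic grid: cubes of dyadic side lengths, nested or disjoint,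
and for each scale the cubes of that side length cover `ℝⁿ`. -/
def IsDyadicGrid {n : ℕ} (𝒟 : Set (Set (Rn n))) : Prop :=
  (∀ Q ∈ 𝒟, ∃ (c : Rn n) (k : ℤ), Q = cube c ((2:ℝ) ^ k)) ∧
  (∀ Q ∈ 𝒟, ∀ R ∈ 𝒟, Q ∩ R = Q ∨ Q ∩ R = R ∨ Q ∩ R = ∅) ∧
  (∀ k : ℤ, (⋃ Q ∈ {Q | Q ∈ 𝒟 ∧ ∃ c : Rn n, Q = cube c ((2:ℝ) ^ k)}, Q) = univ)

/-- The multilinear fractional maximal operator `ℳ_α`. -/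
def MM (n m : ℕ) (α : ℝ) (g : Fin m → Rn n → ℝ≥0∞) (x : Rn n) : ℝ≥0∞ :=
  ⨆ (c : Rn n) (l : ℝ) (_ : 0 < l) (_ : x ∈ cube c l),
    ∏ i, (volume (cube c l) ^ (-(1 - α / ((m : ℝ) * (n : ℝ)))) * ∫⁻ y in cube c l, g i y)

/-- The multilinear fractional maximal operator restricted to a grid `𝒟`. -/
def MMD (n m : ℕ) (α : ℝ) (𝒟 : Set (Set (Rn n))) (g : Fin m → Rn n → ℝ≥0∞)
    (x : Rn n) : ℝ≥0∞ :=
  ⨆ (Q : Set (Rn n)) (_ : Q ∈ 𝒟) (_ : x ∈ Q),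
    ∏ i, (volume Q ^ (-(1 - α / ((m : ℝ) * (n : ℝ)))) * ∫⁻ y in Q, g i y)

/-- The bilinear fractional maximal operator `ℳ_α(g₁,g₂)`. -/
def M2 (n : ℕ) (α : ℝ) (g₁ g₂ : Rn n → ℝ≥0∞) (x : Rn n) : ℝ≥0∞ :=
  ⨆ (c : Rn n) (l : ℝ) (_ : 0 < l) (_ : x ∈ cube c l),
    (volume (cube c l) ^ (-(1 - α / (2 * (n : ℝ)))) * ∫⁻ y in cube c l, g₁ y) *
      (volume (cube c l) ^ (-(1 - α / (2 * (n : ℝ)))) * ∫⁻ y in cube c l, g₂ y)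

/-- The bilinear dyadic fractional maximal operator `ℳ^𝒟_α(g₁,g₂)`. -/
def M2D (n : ℕ) (α : ℝ) (𝒟 : Set (Set (Rn n))) (g₁ g₂ : Rn n → ℝ≥0∞) (x : Rn n) : ℝ≥0∞ :=
  ⨆ (Q : Set (Rn n)) (_ : Q ∈ 𝒟) (_ : x ∈ Q),
    (volume Q ^ (-(1 - α / (2 * (n : ℝ)))) * ∫⁻ y in Q, g₁ y) *
      (volume Q ^ (-(1 - α / (2 * (n : ℝ)))) * ∫⁻ y in Q, g₂ y)

/-- Sawyer's bilinear testing constant `[w⃗,v]_{S_{P⃗,q}}`. -/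
def sawyer2 (n : ℕ) (α p₁ p₂ q : ℝ) (σ₁ σ₂ v : Rn n → ℝ≥0∞) : ℝ≥0∞ :=
  ⨆ (c : Rn n) (l : ℝ) (_ : 0 < l),
    (∫⁻ x in cube c l,
        M2 n α ((cube c l).indicator σ₁) ((cube c l).indicator σ₂) x ^ q * v x) ^ (1/q) /
      (wtI σ₁ (cube c l) ^ (1/p₁) * wtI σ₂ (cube c l) ^ (1/p₂))

/-- Sawyer's multilinear testing constant. -/
def sawyerM (n m : ℕ) (α q : ℝ) (p : Fin m → ℝ) (σ : Fin m → Rn n → ℝ≥0∞)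
    (v : Rn n → ℝ≥0∞) : ℝ≥0∞ :=
  ⨆ (c : Rn n) (l : ℝ) (_ : 0 < l),
    (∫⁻ x in cube c l, MM n m α (fun i => (cube c l).indicator (σ i)) x ^ q * v x) ^ (1/q) /
      ∏ i, wtI (σ i) (cube c l) ^ (1 / p i)

/-- The principal cubes of `f` relative to `σ` inside `Qbar`, generation by generation. -/
def principalCubes {n : ℕ} (𝒟 : Set (Set (Rn n))) (σ f : Rn n → ℝ≥0∞)
    (Qbar : Set (Rn n)) : ℕ → Set (Set (Rn n))
  | 0 => {Qbar}
  | k + 1 => {G' | G' ∈ 𝒟 ∧ ∃ G ∈ principalCubes 𝒟 σ f Qbar k, G' ⊆ G ∧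
      4 * avgE σ f G < avgE σ f G' ∧
      ∀ G'' ∈ 𝒟, G' ⊆ G'' → G'' ⊆ G → 4 * avgE σ f G < avgE σ f G'' → G'' = G'}


lemma cube_eq_pi {n : ℕ} (c : Rn n) (l : ℝ) :
    cube c l = Set.pi univ (fun i => Ico (c i) (c i + l)) := by
  ext x; simp [cube, Set.mem_pi, Ico]

lemma measurableSet_cube {n : ℕ} (c : Rn n) (l : ℝ) : MeasurableSet (cube c l) := by
  rw [cube_eq_pi]; exact MeasurableSet.univ_pi fun i => measurableSet_Ico

lemma volume_cube {n : ℕ} (c : Rn n) (l : ℝ) :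
    volume (cube c l) = (ENNReal.ofReal l) ^ n := by
  rw [cube_eq_pi, volume_pi_pi]
  simp [Real.volume_Ico]

lemma mem_cube_self {n : ℕ} (c : Rn n) {l : ℝ} (hl : 0 < l) : c ∈ cube c l := by
  intro i; exact ⟨le_rfl, by linarith⟩

lemma cube_vol_pos {n : ℕ} (c : Rn n) {l : ℝ} (hl : 0 < l) : 0 < volume (cube c l) := by
  rw [volume_cube]
  refine pos_iff_ne_zero.2 (pow_ne_zero _ ?_)
  simp [hl]

lemma cube_vol_lt_top {n : ℕ} (c : Rn n) (l : ℝ) : volume (cube c l) < ∞ := by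
  rw [volume_cube]
  exact pow_lt_top ofReal_lt_top

lemma cube_subset_coord {n : ℕ} {c c' : Rn n} {l l' : ℝ} (hl : 0 < l)
    (h : cube c l ⊆ cube c' l') : ∀ i, c' i ≤ c i ∧ c i + l ≤ c' i + l' := by
  intro i
  have h1 := h (mem_cube_self c hl) i
  refine ⟨h1.1, ?_⟩
  by_contra hcon
  push_neg at hcon
  set ε := min (l/2) ((c i + l - (c' i + l'))/2) with hε
  have hε1 : 0 < ε := lt_min (by linarith) (by linarith)
  have hε2 : ε ≤ l/2 := min_le_left _ _
  have hε3 : ε ≤ (c i + l - (c' i + l'))/2 := min_le_right _ _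
  have hx : Function.update c i (c i + l - ε) ∈ cube c l := by
    intro j
    rcases eq_or_ne j i with rfl | hj
    · simp only [Function.update_self]
      constructor <;> [linarith; linarith]
    · simp only [Function.update_of_ne hj]
      exact ⟨le_rfl, by linarith⟩
  have := (h hx i).2
  simp only [Function.update_self] at this
  linarith

lemma cube_subset_side_le {n : ℕ} (hn : 0 < n) {c c' : Rn n} {l l' : ℝ} (hl : 0 < l)
    (h : cube c l ⊆ cube c' l') : l ≤ l' := by
  obtain ⟨i⟩ : Nonempty (Fin n) := ⟨⟨0, hn⟩⟩
  have := cube_subset_coord hl h i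
  linarith [this.1, this.2]

lemma cube_eq_of_subset_of_side_le {n : ℕ} (hn : 0 < n) {c c' : Rn n} {l l' : ℝ} (hl : 0 < l)
    (h : cube c l ⊆ cube c' l') (hle : l' ≤ l) : cube c l = cube c' l' := by
  have hco := cube_subset_coord hl h
  have hll : l = l' := le_antisymm (cube_subset_side_le hn hl h) hle
  subst hll
  have hcc : c = c' := by
    funext i
    have := hco i
    linarith [this.1, this.2]
  rw [hcc]


section grid
variable {n : ℕ} {𝒟 : Set (Set (Rn n))}

lemma grid_nested (hD : IsDyadicGrid 𝒟) {Q R : Set (Rn n)} (hQ : Q ∈ 𝒟) (hR : R ∈ 𝒟)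
    {x : Rn n} (hxQ : x ∈ Q) (hxR : x ∈ R) : Q ⊆ R ∨ R ⊆ Q := by
  rcases hD.2.1 Q hQ R hR with h | h | h
  · left; rw [← h]; exact inter_subset_right
  · right; rw [← h]; exact inter_subset_left
  · exfalso; have : x ∈ Q ∩ R := ⟨hxQ, hxR⟩; rw [h] at this; exact this

lemma grid_vol_pos (hD : IsDyadicGrid 𝒟) {Q : Set (Rn n)} (hQ : Q ∈ 𝒟) : 0 < volume Q := by
  obtain ⟨c, k, rfl⟩ := hD.1 Q hQ
  exact cube_vol_pos c (zpow_pos two_pos k)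

lemma grid_vol_lt_top (hD : IsDyadicGrid 𝒟) {Q : Set (Rn n)} (hQ : Q ∈ 𝒟) : volume Q < ∞ := by
  obtain ⟨c, k, rfl⟩ := hD.1 Q hQ
  exact cube_vol_lt_top c _

lemma grid_measurable (hD : IsDyadicGrid 𝒟) {Q : Set (Rn n)} (hQ : Q ∈ 𝒟) :
    MeasurableSet Q := by
  obtain ⟨c, k, rfl⟩ := hD.1 Q hQ
  exact measurableSet_cube c _

lemma grid_nonempty (hD : IsDyadicGrid 𝒟) {Q : Set (Rn n)} (hQ : Q ∈ 𝒟) : Q.Nonempty := by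
  obtain ⟨c, k, rfl⟩ := hD.1 Q hQ
  exact ⟨c, mem_cube_self c (zpow_pos two_pos k)⟩

lemma grid_eq_of_subset (hn : 0 < n) (hD : IsDyadicGrid 𝒟) {Q R : Set (Rn n)}
    (hQ : Q ∈ 𝒟) (hR : R ∈ 𝒟) (hsub : Q ⊆ R) (hvol : volume R ≤ volume Q) : Q = R := by
  obtain ⟨c, k, rfl⟩ := hD.1 Q hQ
  obtain ⟨c', k', rfl⟩ := hD.1 R hR
  refine cube_eq_of_subset_of_side_le hn (zpow_pos two_pos k) hsub ?_
  rw [volume_cube, volume_cube, ← ENNReal.ofReal_pow (by positivity),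
    ← ENNReal.ofReal_pow (by positivity),
    ENNReal.ofReal_le_ofReal_iff (by positivity)] at hvol
  have := (pow_le_pow_iff_left₀ (by positivity) (by positivity) hn.ne').1 hvol
  linarith

/-- Existence of a maximal cube in a volume-bounded subfamily of a dyadic grid. -/
lemma grid_exists_maximal (hn : 0 < n) (hD : IsDyadicGrid 𝒟) (P : Set (Set (Rn n)))
    (hP : P ⊆ 𝒟) {Q₀ : Set (Rn n)} (hQ₀ : Q₀ ∈ P) {V : ℝ≥0∞} (hV : V ≠ ∞)
    (hvol : ∀ R ∈ P, Q₀ ⊆ R → volume R ≤ V) :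
    ∃ R ∈ P, Q₀ ⊆ R ∧ ∀ R' ∈ P, R ⊆ R' → R' = R := by
  -- bound on the volume of relevant cubes
  obtain ⟨m, hm⟩ := exists_nat_gt V.toReal
  have hVlt : ∀ R ∈ P, Q₀ ⊆ R → volume R < ENNReal.ofReal ((2:ℝ) ^ (m:ℤ)) ^ n := by
    intro R hRP hsub
    refine lt_of_le_of_lt (hvol R hRP hsub) ?_
    calc V = ENNReal.ofReal V.toReal := (ENNReal.ofReal_toReal hV).symm
    _ < ENNReal.ofReal ((2:ℝ) ^ (m:ℤ)) := by
        refine ENNReal.ofReal_lt_ofReal_iff (by positivity) |>.2 ?_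
        calc V.toReal < (m:ℝ) := hm
        _ ≤ (2:ℝ) ^ (m:ℕ) := by
            exact_mod_cast (Nat.lt_two_pow_self (n := m)).le
        _ = (2:ℝ) ^ (m:ℤ) := by rw [zpow_natCast]
    _ ≤ ENNReal.ofReal ((2:ℝ) ^ (m:ℤ)) ^ n := by
        refine le_self_pow ?_ hn.ne'
        simp only [ENNReal.one_le_ofReal]
        exact one_le_zpow₀ one_le_two (by positivity)
  set pred : ℤ → Prop := fun j => ∃ R ∈ P, Q₀ ⊆ R ∧ ∃ c, R = cube c ((2:ℝ) ^ j) with hpred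
  have hinh : ∃ j, pred j := by
    obtain ⟨c, k, hc⟩ := hD.1 Q₀ (hP hQ₀)
    exact ⟨k, Q₀, hQ₀, subset_rfl, c, hc⟩
  have hbdd : ∃ b, ∀ j, pred j → j ≤ b := by
    refine ⟨m, fun j hj => ?_⟩
    obtain ⟨R, hRP, hsub, c, rfl⟩ := hj
    have h1 := hVlt _ hRP hsub
    rw [volume_cube] at h1
    by_contra hcon
    push_neg at hcon
    refine absurd h1 (not_lt.2 ?_)
    refine pow_le_pow_left₀ ?_ ?_ n
    · exact zero_le
    · exact ENNReal.ofReal_le_ofReal (zpow_le_zpow_right₀ one_le_two hcon.le)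
  obtain ⟨j, hjpred, hjmax⟩ := Int.exists_greatest_of_bdd hbdd hinh
  obtain ⟨R, hRP, hsub, c, hRc⟩ := hjpred
  refine ⟨R, hRP, hsub, fun R' hR'P hRR' => ?_⟩
  obtain ⟨c', k', hR'c⟩ := hD.1 R' (hP hR'P)
  have hk' : k' ≤ j := hjmax k' ⟨R', hR'P, hsub.trans hRR', c', hR'c⟩
  rw [hRc, hR'c] at hRR' ⊢
  exact (cube_eq_of_subset_of_side_le hn (zpow_pos two_pos j) hRR'
    (zpow_le_zpow_right₀ one_le_two hk')).symm

/-- A pairwise disjoint subfamily of a dyadic grid is countable. -/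
lemma grid_countable_of_disjoint (hD : IsDyadicGrid 𝒟) (P : Set (Set (Rn n)))
    (hP : P ⊆ 𝒟) (hdisj : ∀ Q ∈ P, ∀ R ∈ P, Q ≠ R → Q ∩ R = ∅) : P.Countable := by
  have hex : ∀ Q ∈ P, ∃ q : Fin n → ℚ, (fun i => (q i : ℝ)) ∈ Q := by
    intro Q hQ
    obtain ⟨c, k, rfl⟩ := hD.1 Q (hP hQ)
    have : ∀ i : Fin n, ∃ q : ℚ, c i < (q:ℝ) ∧ (q:ℝ) < c i + (2:ℝ)^k := by
      intro i
      exact exists_rat_btwn (by linarith [zpow_pos (two_pos (α := ℝ)) k])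
    choose q hq using this
    exact ⟨q, fun i => ⟨(hq i).1.le, (hq i).2⟩⟩
  choose f hf using hex
  rw [← Set.countable_coe_iff]
  have hinj : Function.Injective (fun Q : ↥P => f Q Q.2) := by
    intro Q R hQR
    simp only at hQR
    ext1
    by_contra hne
    have hmem : (fun i => ((f Q Q.2 i : ℝ))) ∈ (Q : Set (Rn n)) ∩ (R : Set (Rn n)) := by
      refine ⟨hf Q Q.2, ?_⟩
      have := hf R R.2
      rw [← hQR] at this
      exact this
    rw [hdisj Q Q.2 R R.2 hne] at hmem
    exact hmem
  exact hinj.countable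

end grid

section sums
variable {ι : Type*}

/-- Cauchy–Schwarz for ENNReal tsums. -/
lemma tsum_sqrt_mul_sqrt_le (a b : ι → ℝ≥0∞) :
    ∑' i, (a i * b i) ^ (1/2 : ℝ) ≤ (∑' i, a i) ^ (1/2 : ℝ) * (∑' i, b i) ^ (1/2 : ℝ) := by
  rw [ENNReal.tsum_eq_iSup_sum]
  refine iSup_le fun s => ?_
  have hpq : (2:ℝ).HolderConjugate 2 := Real.HolderConjugate.two_two
  have hcs := ENNReal.inner_le_Lp_mul_Lq s (fun i => (a i) ^ (1/2:ℝ)) (fun i => (b i) ^ (1/2:ℝ)) hpq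
  simp only [← ENNReal.rpow_mul] at hcs
  norm_num at hcs
  calc ∑ i ∈ s, (a i * b i) ^ (1/2:ℝ)
      = ∑ i ∈ s, (a i) ^ (1/2:ℝ) * (b i) ^ (1/2:ℝ) := by
        refine Finset.sum_congr rfl fun i _ => ?_
        rw [ENNReal.mul_rpow_of_nonneg _ _ (by norm_num)]
    _ ≤ (∑ i ∈ s, a i) ^ (1/2:ℝ) * (∑ i ∈ s, b i) ^ (1/2:ℝ) := by
        convert hcs using 3 <;> norm_num
    _ ≤ (∑' i, a i) ^ (1/2:ℝ) * (∑' i, b i) ^ (1/2:ℝ) := by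
        gcongr <;> [exact ENNReal.sum_le_tsum s; exact ENNReal.sum_le_tsum s]

/-- `(x+y)^p ≤ x^p + y^p` for `0 < p ≤ 1`. -/
lemma add_rpow_le {p : ℝ} (hp : 0 < p) (hp1 : p ≤ 1) (x y : ℝ≥0∞) :
    (x + y) ^ p ≤ x ^ p + y ^ p := by
  have h := ENNReal.rpow_add_rpow_le x y hp hp1
  simp only [ENNReal.rpow_one, div_one] at h
  calc (x + y) ^ p ≤ ((x ^ p + y ^ p) ^ (1/p)) ^ p := by
        exact ENNReal.rpow_le_rpow h hp.le
    _ = x ^ p + y ^ p := by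
        rw [← ENNReal.rpow_mul, one_div, inv_mul_cancel₀ hp.ne', ENNReal.rpow_one]

lemma rpow_tsum_le {p : ℝ} (hp : 0 < p) (hp1 : p ≤ 1) (a : ι → ℝ≥0∞) :
    (∑' i, a i) ^ p ≤ ∑' i, (a i) ^ p := by
  have hfin : ∀ s : Finset ι, (∑ i ∈ s, a i) ^ p ≤ ∑ i ∈ s, (a i) ^ p := by
    intro s
    induction s using Finset.cons_induction with
    | empty => simp [ENNReal.zero_rpow_of_pos hp]
    | cons j s hj ih =>
        rw [Finset.sum_cons, Finset.sum_cons]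
        exact le_trans (add_rpow_le hp hp1 _ _) (by gcongr)
  have htendsto : Filter.Tendsto (fun s : Finset ι => (∑ i ∈ s, a i) ^ p)
      Filter.atTop (nhds ((∑' i, a i) ^ p)) :=
    (ENNReal.continuous_rpow_const.tendsto _).comp ENNReal.summable.hasSum
  refine le_of_tendsto htendsto (Filter.Eventually.of_forall fun s => ?_)
  exact le_trans (hfin s) (ENNReal.sum_le_tsum s)

/-- Hölder-type bound : `∑ (aᵢbᵢ)^θ ≤ (∑a ∑b)^θ` for `θ ≥ 1/2`. -/
lemma tsum_mul_rpow_le {θ : ℝ} (hθ : 1/2 ≤ θ) (a b : ι → ℝ≥0∞)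
    (hA : ∑' i, a i ≠ ∞) (hB : ∑' i, b i ≠ ∞) :
    ∑' i, (a i * b i) ^ θ ≤ ((∑' i, a i) * (∑' i, b i)) ^ θ := by
  set A := ∑' i, a i with hAdef
  set B := ∑' i, b i with hBdef
  rcases eq_or_ne A 0 with hA0 | hA0
  · have : ∀ i, a i = 0 := ENNReal.tsum_eq_zero.1 (hAdef ▸ hA0)
    have hz : ∀ i, (a i * b i) ^ θ = 0 := fun i => by
      rw [this i, zero_mul, ENNReal.zero_rpow_of_pos (by linarith)]
    simp [hz]
  rcases eq_or_ne B 0 with hB0 | hB0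
  · have : ∀ i, b i = 0 := ENNReal.tsum_eq_zero.1 (hBdef ▸ hB0)
    have hz : ∀ i, (a i * b i) ^ θ = 0 := fun i => by
      rw [this i, mul_zero, ENNReal.zero_rpow_of_pos (by linarith)]
    simp [hz]
  have hAB0 : A * B ≠ 0 := mul_ne_zero hA0 hB0
  have hABtop : A * B ≠ ∞ := ENNReal.mul_ne_top hA hB
  calc ∑' i, (a i * b i) ^ θ
      = ∑' i, (a i * b i) ^ (1/2:ℝ) * (a i * b i) ^ (θ - 1/2) := by
        refine tsum_congr fun i => ?_
        rw [← ENNReal.rpow_add_of_nonneg _ _ (by norm_num) (by linarith)]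
        norm_num
    _ ≤ ∑' i, (a i * b i) ^ (1/2:ℝ) * (A * B) ^ (θ - 1/2) := by
        refine ENNReal.tsum_le_tsum fun i => ?_
        refine mul_le_mul' le_rfl (ENNReal.rpow_le_rpow ?_ (by linarith))
        exact mul_le_mul' (ENNReal.le_tsum i) (ENNReal.le_tsum i)
    _ = (∑' i, (a i * b i) ^ (1/2:ℝ)) * (A * B) ^ (θ - 1/2) := ENNReal.tsum_mul_right
    _ ≤ (A ^ (1/2:ℝ) * B ^ (1/2:ℝ)) * (A * B) ^ (θ - 1/2) := by
        gcongr
        exact tsum_sqrt_mul_sqrt_le a b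
    _ = (A * B) ^ θ := by
        rw [← ENNReal.mul_rpow_of_nonneg _ _ (by norm_num : (0:ℝ) ≤ 1/2),
          ← ENNReal.rpow_add_of_nonneg _ _ (by norm_num) (by linarith)]
        norm_num

end sums


section core
variable {n : ℕ} {α : ℝ} {𝒟 : Set (Set (Rn n))} {g₁ g₂ : Rn n → ℝ≥0∞}

/-- The cube functional of the bilinear dyadic maximal operator. -/
def Afn (n : ℕ) (α : ℝ) (g₁ g₂ : Rn n → ℝ≥0∞) (Q : Set (Rn n)) : ℝ≥0∞ :=
  (volume Q ^ (-(1 - α / (2 * (n : ℝ)))) * ∫⁻ y in Q, g₁ y) *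
    (volume Q ^ (-(1 - α / (2 * (n : ℝ)))) * ∫⁻ y in Q, g₂ y)

lemma M2D_eq_iSup (x : Rn n) :
    M2D n α 𝒟 g₁ g₂ x = ⨆ (Q : Set (Rn n)) (_ : Q ∈ 𝒟) (_ : x ∈ Q), Afn n α g₁ g₂ Q := rfl

lemma Afn_le_M2D {Q : Set (Rn n)} (hQ : Q ∈ 𝒟) {x : Rn n} (hx : x ∈ Q) :
    Afn n α g₁ g₂ Q ≤ M2D n α 𝒟 g₁ g₂ x := by
  rw [M2D_eq_iSup]
  exact le_iSup₂_of_le Q hQ (le_iSup_of_le hx le_rfl)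

lemma lt_M2D_iff {lam : ℝ≥0∞} {x : Rn n} :
    lam < M2D n α 𝒟 g₁ g₂ x ↔ ∃ Q ∈ 𝒟, x ∈ Q ∧ lam < Afn n α g₁ g₂ Q := by
  rw [M2D_eq_iSup]
  simp only [lt_iSup_iff]
  tauto

lemma Afn_eq (hn : 0 < n) (hD : IsDyadicGrid 𝒟) {Q : Set (Rn n)} (hQ : Q ∈ 𝒟) :
    Afn n α g₁ g₂ Q
      = volume Q ^ (α / (n:ℝ) - 2) * (∫⁻ y in Q, g₁ y) * (∫⁻ y in Q, g₂ y) := by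
  have hv0 : volume Q ≠ 0 := (grid_vol_pos hD hQ).ne'
  have hvt : volume Q ≠ ∞ := (grid_vol_lt_top hD hQ).ne
  have hnn : (n:ℝ) ≠ 0 := Nat.cast_ne_zero.2 hn.ne'
  have hexp : α / (n:ℝ) - 2 = (-(1 - α / (2 * (n : ℝ)))) + (-(1 - α / (2 * (n : ℝ)))) := by
    field_simp
    ring
  rw [Afn, hexp, ENNReal.rpow_add _ _ hv0 hvt]
  ring_nf

/-- Cubes on which the functional is large. -/
def Afam (n : ℕ) (α : ℝ) (𝒟 : Set (Set (Rn n))) (g₁ g₂ : Rn n → ℝ≥0∞) (lam : ℝ≥0∞) :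
    Set (Set (Rn n)) :=
  {Q | Q ∈ 𝒟 ∧ lam < Afn n α g₁ g₂ Q}

/-- Maximal cubes on which the functional is large. -/
def Ffam (n : ℕ) (α : ℝ) (𝒟 : Set (Set (Rn n))) (g₁ g₂ : Rn n → ℝ≥0∞) (lam : ℝ≥0∞) :
    Set (Set (Rn n)) :=
  {Q | Q ∈ Afam n α 𝒟 g₁ g₂ lam ∧
    ∀ R ∈ Afam n α 𝒟 g₁ g₂ lam, Q ⊆ R → R = Q}

lemma afam_subset_Omega {lam : ℝ≥0∞} {Q : Set (Rn n)}
    (hQ : Q ∈ Afam n α 𝒟 g₁ g₂ lam) : Q ⊆ {x | lam < M2D n α 𝒟 g₁ g₂ x} :=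
  fun x hx => lt_of_lt_of_le hQ.2 (Afn_le_M2D hQ.1 hx)

lemma afam_vol_rpow_le (hn : 0 < n) (hD : IsDyadicGrid 𝒟) {lam : ℝ≥0∞}
    (hlam0 : lam ≠ 0) (hlamt : lam ≠ ∞) {Q : Set (Rn n)}
    (hQ : Q ∈ Afam n α 𝒟 g₁ g₂ lam) :
    volume Q ^ ((2:ℝ) - α / n) ≤ lam⁻¹ * ((∫⁻ y in Q, g₁ y) * (∫⁻ y in Q, g₂ y)) := by
  have hv0 : volume Q ≠ 0 := (grid_vol_pos hD hQ.1).ne'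
  have hvt : volume Q ≠ ∞ := (grid_vol_lt_top hD hQ.1).ne
  have h1 : lam < volume Q ^ (α / (n:ℝ) - 2) * (∫⁻ y in Q, g₁ y) * (∫⁻ y in Q, g₂ y) := by
    rw [← Afn_eq hn hD hQ.1]; exact hQ.2
  have h2 : lam * volume Q ^ ((2:ℝ) - α / n)
      ≤ (∫⁻ y in Q, g₁ y) * (∫⁻ y in Q, g₂ y) := by
    calc lam * volume Q ^ ((2:ℝ) - α / n)
        ≤ (volume Q ^ (α / (n:ℝ) - 2) * (∫⁻ y in Q, g₁ y) * (∫⁻ y in Q, g₂ y))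
            * volume Q ^ ((2:ℝ) - α / n) := mul_le_mul' h1.le le_rfl
      _ = (volume Q ^ (α / (n:ℝ) - 2) * volume Q ^ ((2:ℝ) - α / n))
            * ((∫⁻ y in Q, g₁ y) * (∫⁻ y in Q, g₂ y)) := by ring
      _ = (∫⁻ y in Q, g₁ y) * (∫⁻ y in Q, g₂ y) := by
          rw [← ENNReal.rpow_add _ _ hv0 hvt]
          norm_num
  calc volume Q ^ ((2:ℝ) - α / n) = lam⁻¹ * (lam * volume Q ^ ((2:ℝ) - α / n)) := by
        rw [← mul_assoc, ENNReal.inv_mul_cancel hlam0 hlamt, one_mul]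
    _ ≤ lam⁻¹ * ((∫⁻ y in Q, g₁ y) * (∫⁻ y in Q, g₂ y)) := by gcongr

lemma afam_vol_le (hn : 0 < n) (hD : IsDyadicGrid 𝒟) (hα : α < 2 * n) {lam : ℝ≥0∞}
    (hlam0 : lam ≠ 0) (hlamt : lam ≠ ∞) {Q : Set (Rn n)}
    (hQ : Q ∈ Afam n α 𝒟 g₁ g₂ lam) :
    volume Q ≤ (lam⁻¹ * ((∫⁻ x, g₁ x) * (∫⁻ x, g₂ x))) ^ (((2:ℝ) - α / n)⁻¹) := by
  have hb : (0:ℝ) < 2 - α / n := by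
    have : α / n < 2 := by
      rw [div_lt_iff₀ (by exact_mod_cast hn)]
      linarith [hα]
    linarith
  have h1 := afam_vol_rpow_le hn hD hlam0 hlamt hQ
  have h2 : volume Q ^ ((2:ℝ) - α / n) ≤ lam⁻¹ * ((∫⁻ x, g₁ x) * (∫⁻ x, g₂ x)) := by
    refine h1.trans ?_
    gcongr
    · exact Measure.restrict_le_self
    · exact Measure.restrict_le_self
  calc volume Q = (volume Q ^ ((2:ℝ) - α / n)) ^ (((2:ℝ) - α / n)⁻¹) := by
        rw [← ENNReal.rpow_mul, mul_inv_cancel₀ hb.ne', ENNReal.rpow_one]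
    _ ≤ (lam⁻¹ * ((∫⁻ x, g₁ x) * (∫⁻ x, g₂ x))) ^ (((2:ℝ) - α / n)⁻¹) :=
        ENNReal.rpow_le_rpow h2 (by positivity)

lemma exists_ffam_above (hn : 0 < n) (hD : IsDyadicGrid 𝒟) (hα : α < 2 * n)
    (hI₁ : (∫⁻ x, g₁ x) ≠ ∞) (hI₂ : (∫⁻ x, g₂ x) ≠ ∞) {lam : ℝ≥0∞}
    (hlam0 : lam ≠ 0) (hlamt : lam ≠ ∞) {Q : Set (Rn n)}
    (hQ : Q ∈ Afam n α 𝒟 g₁ g₂ lam) :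
    ∃ R ∈ Ffam n α 𝒟 g₁ g₂ lam, Q ⊆ R := by
  have hV : (lam⁻¹ * ((∫⁻ x, g₁ x) * (∫⁻ x, g₂ x))) ^ (((2:ℝ) - α / n)⁻¹) ≠ ∞ := by
    refine ENNReal.rpow_ne_top_of_nonneg ?_ ?_
    · have : α / n < 2 := by
        rw [div_lt_iff₀ (by exact_mod_cast hn)]
        linarith [hα]
      have h20 : (0:ℝ) < 2 - α / n := by linarith
      positivity
    · exact ENNReal.mul_ne_top (ENNReal.inv_ne_top.2 hlam0) (ENNReal.mul_ne_top hI₁ hI₂)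
  obtain ⟨R, hRP, hsub, hmax⟩ := grid_exists_maximal hn hD (Afam n α 𝒟 g₁ g₂ lam)
    (fun R hR => hR.1) hQ hV
    (fun R hR _ => afam_vol_le hn hD hα hlam0 hlamt hR)
  exact ⟨R, ⟨hRP, fun R' hR' hRR' => hmax R' hR' hRR'⟩, hsub⟩

lemma ffam_disjoint {lam : ℝ≥0∞} (hD : IsDyadicGrid 𝒟) :
    ∀ Q ∈ Ffam n α 𝒟 g₁ g₂ lam, ∀ R ∈ Ffam n α 𝒟 g₁ g₂ lam, Q ≠ R → Q ∩ R = ∅ := by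
  intro Q hQ R hR hne
  rw [eq_empty_iff_forall_notMem]
  rintro x ⟨hxQ, hxR⟩
  rcases grid_nested hD hQ.1.1 hR.1.1 hxQ hxR with h | h
  · exact hne (hQ.2 R hR.1 h).symm
  · exact hne (hR.2 Q hQ.1 h)

lemma ffam_countable {lam : ℝ≥0∞} (hD : IsDyadicGrid 𝒟) :
    (Ffam n α 𝒟 g₁ g₂ lam).Countable :=
  grid_countable_of_disjoint hD _ (fun Q hQ => hQ.1.1) (ffam_disjoint hD)

lemma omega_subset_union (hn : 0 < n) (hD : IsDyadicGrid 𝒟) (hα : α < 2 * n)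
    (hI₁ : (∫⁻ x, g₁ x) ≠ ∞) (hI₂ : (∫⁻ x, g₂ x) ≠ ∞) {lam : ℝ≥0∞}
    (hlam0 : lam ≠ 0) (hlamt : lam ≠ ∞) :
    {x | lam < M2D n α 𝒟 g₁ g₂ x} ⊆ ⋃ Q ∈ Ffam n α 𝒟 g₁ g₂ lam, Q := by
  intro x hx
  obtain ⟨Q, hQD, hxQ, hQA⟩ := lt_M2D_iff.1 hx
  obtain ⟨R, hRF, hQR⟩ := exists_ffam_above hn hD hα hI₁ hI₂ hlam0 hlamt ⟨hQD, hQA⟩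
  exact mem_biUnion hRF (hQR hxQ)

/-- Weak-type estimate. -/
lemma weak_type (hn : 0 < n) (hD : IsDyadicGrid 𝒟) (hα0 : 0 ≤ α) (hα : α < 2 * n)
    (hI₁ : (∫⁻ x, g₁ x) ≠ ∞) (hI₂ : (∫⁻ x, g₂ x) ≠ ∞) {lam : ℝ≥0∞}
    (hlam0 : lam ≠ 0) (hlamt : lam ≠ ∞) :
    volume {x | lam < M2D n α 𝒟 g₁ g₂ x}
      ≤ (lam⁻¹ * ((∫⁻ x, g₁ x) * (∫⁻ x, g₂ x))) ^ (((2:ℝ) - α / n)⁻¹) := by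
  have hnr : (0:ℝ) < (n:ℝ) := by exact_mod_cast hn
  have hb : (0:ℝ) < 2 - α / n := by
    have : α / n < 2 := by rw [div_lt_iff₀ hnr]; linarith
    linarith
  have hb2 : (2:ℝ) - α / n ≤ 2 := by
    have : 0 ≤ α / n := by positivity
    linarith
  have hθ : (1:ℝ)/2 ≤ ((2:ℝ) - α / n)⁻¹ := by
    rw [one_div, inv_le_inv₀ (by norm_num) hb]
    · exact hb2
  have hcnt : (Ffam n α 𝒟 g₁ g₂ lam).Countable := ffam_countable hD
  have := hcnt.to_subtype
  calc volume {x | lam < M2D n α 𝒟 g₁ g₂ x}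
      ≤ volume (⋃ Q ∈ Ffam n α 𝒟 g₁ g₂ lam, Q) :=
        measure_mono (omega_subset_union hn hD hα hI₁ hI₂ hlam0 hlamt)
    _ = volume (⋃ Q : ↥(Ffam n α 𝒟 g₁ g₂ lam), (Q : Set (Rn n))) := by
        rw [iUnion_coe_set]
    _ ≤ ∑' Q : ↥(Ffam n α 𝒟 g₁ g₂ lam), volume (Q : Set (Rn n)) := measure_iUnion_le _
    _ ≤ ∑' Q : ↥(Ffam n α 𝒟 g₁ g₂ lam),
          (lam⁻¹ ^ (((2:ℝ) - α / n)⁻¹)) *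
          (((∫⁻ y in (Q:Set (Rn n)), g₁ y) * (∫⁻ y in (Q:Set (Rn n)), g₂ y))
            ^ (((2:ℝ) - α / n)⁻¹)) := by
        refine ENNReal.tsum_le_tsum fun Q => ?_
        rw [← ENNReal.mul_rpow_of_nonneg _ _ (by positivity)]
        have h1 := afam_vol_rpow_le hn hD hlam0 hlamt Q.2.1
        calc volume (Q:Set (Rn n))
            = (volume (Q:Set (Rn n)) ^ ((2:ℝ) - α/n)) ^ (((2:ℝ) - α / n)⁻¹) := by
              rw [← ENNReal.rpow_mul, mul_inv_cancel₀ hb.ne', ENNReal.rpow_one]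
          _ ≤ _ := ENNReal.rpow_le_rpow h1 (by positivity)
    _ = (lam⁻¹ ^ (((2:ℝ) - α / n)⁻¹)) * ∑' Q : ↥(Ffam n α 𝒟 g₁ g₂ lam),
          (((∫⁻ y in (Q:Set (Rn n)), g₁ y) * (∫⁻ y in (Q:Set (Rn n)), g₂ y))
            ^ (((2:ℝ) - α / n)⁻¹)) := ENNReal.tsum_mul_left
    _ ≤ (lam⁻¹ ^ (((2:ℝ) - α / n)⁻¹)) *
          ((∑' Q : ↥(Ffam n α 𝒟 g₁ g₂ lam), (∫⁻ y in (Q:Set (Rn n)), g₁ y)) *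
           (∑' Q : ↥(Ffam n α 𝒟 g₁ g₂ lam), (∫⁻ y in (Q:Set (Rn n)), g₂ y)))
            ^ (((2:ℝ) - α / n)⁻¹) := by
        gcongr
        refine tsum_mul_rpow_le hθ _ _ ?_ ?_
        · refine ne_top_of_le_ne_top hI₁ ?_
          rw [← lintegral_iUnion (fun Q => grid_measurable hD Q.2.1.1) ?_ g₁]
          · exact setLIntegral_le_lintegral _ _
          · intro Q R hQR
            have := ffam_disjoint hD Q.1 Q.2 R.1 R.2 (fun h => hQR (Subtype.ext h))
            exact disjoint_iff_inter_eq_empty.2 this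
        · refine ne_top_of_le_ne_top hI₂ ?_
          rw [← lintegral_iUnion (fun Q => grid_measurable hD Q.2.1.1) ?_ g₂]
          · exact setLIntegral_le_lintegral _ _
          · intro Q R hQR
            have := ffam_disjoint hD Q.1 Q.2 R.1 R.2 (fun h => hQR (Subtype.ext h))
            exact disjoint_iff_inter_eq_empty.2 this
    _ ≤ (lam⁻¹ ^ (((2:ℝ) - α / n)⁻¹)) *
          ((∫⁻ x, g₁ x) * (∫⁻ x, g₂ x)) ^ (((2:ℝ) - α / n)⁻¹) := by
        gcongr
        · rw [← lintegral_iUnion (fun Q => grid_measurable hD Q.2.1.1) ?_ g₁]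
          · exact setLIntegral_le_lintegral _ _
          · intro Q R hQR
            have := ffam_disjoint hD Q.1 Q.2 R.1 R.2 (fun h => hQR (Subtype.ext h))
            exact disjoint_iff_inter_eq_empty.2 this
        · rw [← lintegral_iUnion (fun Q => grid_measurable hD Q.2.1.1) ?_ g₂]
          · exact setLIntegral_le_lintegral _ _
          · intro Q R hQR
            have := ffam_disjoint hD Q.1 Q.2 R.1 R.2 (fun h => hQR (Subtype.ext h))
            exact disjoint_iff_inter_eq_empty.2 this
    _ = (lam⁻¹ * ((∫⁻ x, g₁ x) * (∫⁻ x, g₂ x))) ^ (((2:ℝ) - α / n)⁻¹) := by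
        have hpos : (0:ℝ) ≤ ((2:ℝ) - α / n)⁻¹ := by positivity
        simp [ENNReal.mul_rpow_of_nonneg _ _ hpos]

/-- Lower bound for maximal cubes of `Ω_lam`. -/
lemma max_cube_lower (hn : 0 < n) (hD : IsDyadicGrid 𝒟) (hα0 : 0 ≤ α) (hα : α < 2 * n)
    (hI₁ : (∫⁻ x, g₁ x) ≠ ∞) (hI₂ : (∫⁻ x, g₂ x) ≠ ∞) {lam : ℝ≥0∞}
    (hlam0 : lam ≠ 0) (hlamt : lam ≠ ∞) {Q : Set (Rn n)} (hQD : Q ∈ 𝒟)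
    (hQΩ : Q ⊆ {x | lam < M2D n α 𝒟 g₁ g₂ x})
    (hmax : ∀ R ∈ 𝒟, Q ⊆ R → R ⊆ {x | lam < M2D n α 𝒟 g₁ g₂ x} → R = Q) :
    lam ≤ Afn n α g₁ g₂ Q := by
  have hnr : (0:ℝ) < (n:ℝ) := by exact_mod_cast hn
  have hb : (0:ℝ) < 2 - α / n := by
    have : α / n < 2 := by rw [div_lt_iff₀ hnr]; linarith
    linarith
  have hb2 : (2:ℝ) - α / n ≤ 2 := by
    have : 0 ≤ α / n := by positivity
    linarith
  by_cases hQA : lam < Afn n α g₁ g₂ Q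
  · exact hQA.le
  -- the maximal cubes of the `Afam` family partition `Q`
  set ℱQ : Set (Set (Rn n)) := {R | R ∈ Ffam n α 𝒟 g₁ g₂ lam ∧ R ⊆ Q} with hℱQ
  have hcover : Q = ⋃ R ∈ ℱQ, R := by
    apply Subset.antisymm
    · intro y hy
      obtain ⟨P, hPD, hyP, hPA⟩ := lt_M2D_iff.1 (hQΩ hy)
      obtain ⟨R, hRF, hPR⟩ := exists_ffam_above hn hD hα hI₁ hI₂ hlam0 hlamt ⟨hPD, hPA⟩
      have hyR : y ∈ R := hPR hyP
      rcases grid_nested hD hQD hRF.1.1 hy hyR with h | h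
      · exfalso
        have := hmax R hRF.1.1 h (afam_subset_Omega hRF.1)
        rw [← this] at hQA
        exact hQA hRF.1.2
      · exact mem_biUnion ⟨hRF, h⟩ hyR
    · exact iUnion₂_subset fun R hR => hR.2
  have hcnt : ℱQ.Countable := (ffam_countable hD).mono (fun R hR => hR.1)
  have := hcnt.to_subtype
  have hmes : ∀ R : ↥ℱQ, MeasurableSet (R : Set (Rn n)) :=
    fun R => grid_measurable hD R.2.1.1.1
  have hdisj : Pairwise (Function.onFun Disjoint (fun R : ↥ℱQ => (R : Set (Rn n)))) := by
    intro R R' hne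
    have := ffam_disjoint hD R.1 R.2.1 R'.1 R'.2.1 (fun h => hne (Subtype.ext h))
    exact disjoint_iff_inter_eq_empty.2 this
  have hcover' : Q = ⋃ R : ↥ℱQ, (R : Set (Rn n)) := by
    rw [hcover, iUnion_coe_set]
  have hvol : volume Q = ∑' R : ↥ℱQ, volume (R : Set (Rn n)) := by
    rw [hcover']
    exact measure_iUnion hdisj hmes
  have hint1 : (∫⁻ y in Q, g₁ y) = ∑' R : ↥ℱQ, ∫⁻ y in (R : Set (Rn n)), g₁ y := by
    rw [hcover']
    exact lintegral_iUnion hmes hdisj g₁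
  have hint2 : (∫⁻ y in Q, g₂ y) = ∑' R : ↥ℱQ, ∫⁻ y in (R : Set (Rn n)), g₂ y := by
    rw [hcover']
    exact lintegral_iUnion hmes hdisj g₂
  -- key estimate
  have key : lam ^ (1/2:ℝ) * (volume Q) ^ (((2:ℝ) - α / n)/2)
      ≤ ((∫⁻ y in Q, g₁ y) * (∫⁻ y in Q, g₂ y)) ^ (1/2:ℝ) := by
    calc lam ^ (1/2:ℝ) * (volume Q) ^ (((2:ℝ) - α / n)/2)
        ≤ lam ^ (1/2:ℝ) * ∑' R : ↥ℱQ, (volume (R : Set (Rn n))) ^ (((2:ℝ) - α / n)/2) := by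
          gcongr
          rw [hvol]
          exact rpow_tsum_le (by positivity) (by linarith) _
      _ = ∑' R : ↥ℱQ, lam ^ (1/2:ℝ) * (volume (R : Set (Rn n))) ^ (((2:ℝ) - α / n)/2) :=
          ENNReal.tsum_mul_left.symm
      _ ≤ ∑' R : ↥ℱQ, ((∫⁻ y in (R : Set (Rn n)), g₁ y) *
            (∫⁻ y in (R : Set (Rn n)), g₂ y)) ^ (1/2:ℝ) := by
          refine ENNReal.tsum_le_tsum fun R => ?_
          have h1 := afam_vol_rpow_le hn hD hlam0 hlamt R.2.1.1
          have h2 : lam * (volume (R : Set (Rn n))) ^ ((2:ℝ) - α / n)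
              ≤ (∫⁻ y in (R : Set (Rn n)), g₁ y) * (∫⁻ y in (R : Set (Rn n)), g₂ y) := by
            calc lam * (volume (R : Set (Rn n))) ^ ((2:ℝ) - α / n)
                ≤ lam * (lam⁻¹ * ((∫⁻ y in (R : Set (Rn n)), g₁ y) *
                    (∫⁻ y in (R : Set (Rn n)), g₂ y))) := by gcongr
              _ = _ := by
                  rw [← mul_assoc, ENNReal.mul_inv_cancel hlam0 hlamt, one_mul]
          calc lam ^ (1/2:ℝ) * (volume (R : Set (Rn n))) ^ (((2:ℝ) - α / n)/2)
              = (lam * (volume (R : Set (Rn n))) ^ ((2:ℝ) - α / n)) ^ (1/2:ℝ) := by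
                rw [ENNReal.mul_rpow_of_nonneg _ _ (by norm_num : (0:ℝ) ≤ 1/2),
                  ← ENNReal.rpow_mul]
                ring_nf
            _ ≤ _ := ENNReal.rpow_le_rpow h2 (by norm_num)
      _ ≤ ((∑' R : ↥ℱQ, ∫⁻ y in (R : Set (Rn n)), g₁ y) ^ (1/2:ℝ)) *
            ((∑' R : ↥ℱQ, ∫⁻ y in (R : Set (Rn n)), g₂ y) ^ (1/2:ℝ)) :=
          tsum_sqrt_mul_sqrt_le _ _
      _ = ((∫⁻ y in Q, g₁ y) * (∫⁻ y in Q, g₂ y)) ^ (1/2:ℝ) := by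
          rw [hint1, hint2, ENNReal.mul_rpow_of_nonneg _ _ (by norm_num : (0:ℝ) ≤ 1/2)]
  -- square the key estimate
  have key2 : lam * (volume Q) ^ ((2:ℝ) - α / n)
      ≤ (∫⁻ y in Q, g₁ y) * (∫⁻ y in Q, g₂ y) := by
    have := mul_le_mul' key key
    calc lam * (volume Q) ^ ((2:ℝ) - α / n)
        = (lam ^ (1/2:ℝ) * (volume Q) ^ (((2:ℝ) - α / n)/2)) *
          (lam ^ (1/2:ℝ) * (volume Q) ^ (((2:ℝ) - α / n)/2)) := by
          rw [mul_mul_mul_comm, ← ENNReal.rpow_add_of_nonneg _ _ (by norm_num) (by norm_num),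
            ← ENNReal.rpow_add_of_nonneg _ _ (by positivity) (by positivity)]
          norm_num
      _ ≤ (((∫⁻ y in Q, g₁ y) * (∫⁻ y in Q, g₂ y)) ^ (1/2:ℝ)) *
          (((∫⁻ y in Q, g₁ y) * (∫⁻ y in Q, g₂ y)) ^ (1/2:ℝ)) := this
      _ = (∫⁻ y in Q, g₁ y) * (∫⁻ y in Q, g₂ y) := by
          rw [← ENNReal.rpow_add_of_nonneg _ _ (by norm_num) (by norm_num)]
          norm_num
  -- conclude
  have hv0 : volume Q ≠ 0 := (grid_vol_pos hD hQD).ne'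
  have hvt : volume Q ≠ ∞ := (grid_vol_lt_top hD hQD).ne
  rw [Afn_eq hn hD hQD]
  have hexp : α / (n:ℝ) - 2 = -((2:ℝ) - α / n) := by ring
  calc lam = volume Q ^ (-((2:ℝ) - α / n)) * (lam * volume Q ^ ((2:ℝ) - α / n)) := by
        rw [← mul_assoc, mul_comm (volume Q ^ (-((2:ℝ) - α / n))) lam, mul_assoc,
          ← ENNReal.rpow_add _ _ hv0 hvt]
        norm_num
    _ ≤ volume Q ^ (-((2:ℝ) - α / n)) * ((∫⁻ y in Q, g₁ y) * (∫⁻ y in Q, g₂ y)) := by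
        gcongr
    _ = volume Q ^ (α / (n:ℝ) - 2) * (∫⁻ y in Q, g₁ y) * (∫⁻ y in Q, g₂ y) := by
        rw [hexp, mul_assoc]

end core


/-- a.e. on `{ℳ^𝒟_α(g₁,g₂) > 0}`, the maximal function is
comparable to the sparse sum `∑_{k,j} (avg on Q_j^k) 1_{E(Q_j^k)}`. -/
theorem stmt6 (n : ℕ) (hn : 0 < n) (α : ℝ) (hα0 : 0 ≤ α) (hα : α < 2 * n) :
    ∃ c C : ℝ≥0∞, 0 < c ∧ C ≠ ∞ ∧
      ∀ (𝒟 : Set (Set (Rn n))), IsDyadicGrid 𝒟 →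
      ∀ (g₁ g₂ : Rn n → ℝ≥0∞), Measurable g₁ → Measurable g₂ →
        (∫⁻ x, g₁ x) ≠ ∞ → (∫⁻ x, g₂ x) ≠ ∞ →
        let a : ℝ≥0∞ := 2 ^ (((2:ℝ) - α / n) * ((n:ℝ) + 1))
        let Ω : ℤ → Set (Rn n) := fun k => {x | a ^ k < M2D n α 𝒟 g₁ g₂ x}
        let S : ℤ → Set (Set (Rn n)) := fun k =>
          {Q | Q ∈ 𝒟 ∧ Q ⊆ Ω k ∧ ∀ R ∈ 𝒟, Q ⊆ R → R ⊆ Ω k → R = Q}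
        let T : Rn n → ℝ≥0∞ := fun x => ∑' (k : ℤ), ∑' (Q : ↥(S k)),
          (volume (Q : Set (Rn n)) ^ (α / (n:ℝ) - 2) *
              (∫⁻ y in (Q : Set (Rn n)), g₁ y) * (∫⁻ y in (Q : Set (Rn n)), g₂ y)) *
            ((Q : Set (Rn n)) \ Ω (k+1)).indicator (fun _ => (1:ℝ≥0∞)) x
        ∀ᵐ x, 0 < M2D n α 𝒟 g₁ g₂ x →
          c * M2D n α 𝒟 g₁ g₂ x ≤ T x ∧ T x ≤ C * M2D n α 𝒟 g₁ g₂ x := by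
  have hnr : (0:ℝ) < (n:ℝ) := by exact_mod_cast hn
  have hb : (0:ℝ) < 2 - α / n := by
    have : α / n < 2 := by rw [div_lt_iff₀ hnr]; linarith
    linarith
  have he : (0:ℝ) < ((2:ℝ) - α / n) * ((n:ℝ) + 1) := by positivity
  refine ⟨((2:ℝ≥0∞) ^ (((2:ℝ) - α / n) * ((n:ℝ) + 1)))⁻¹, 1, ?_, one_ne_top, ?_⟩
  · exact ENNReal.inv_pos.2 (ENNReal.rpow_ne_top_of_nonneg he.le (by norm_num))
  intro 𝒟 hD g₁ g₂ hg₁ hg₂ hI₁ hI₂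
  intro a Ω S T
  have ha1 : 1 < a := ENNReal.one_lt_rpow one_lt_two he
  have ha0 : a ≠ 0 := (zero_lt_one.trans ha1).ne'
  have hat : a ≠ ∞ := ENNReal.rpow_ne_top_of_nonneg he.le (by norm_num)
  have hz0 : ∀ k : ℤ, a ^ k ≠ 0 := fun k => (ENNReal.zpow_pos ha0 hat k).ne'
  have hzt : ∀ k : ℤ, a ^ k ≠ ∞ := fun k => (ENNReal.zpow_lt_top ha0 hat k).ne
  have hIne : (∫⁻ x, g₁ x) * (∫⁻ x, g₂ x) ≠ ∞ := ENNReal.mul_ne_top hI₁ hI₂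
  have hinvlt : a⁻¹ < 1 := ENNReal.inv_lt_one.2 ha1
  -- the maximal function is a.e. finite
  have hzero : volume {x | M2D n α 𝒟 g₁ g₂ x = ∞} = 0 := by
    have hle : ∀ k : ℕ, volume {x | M2D n α 𝒟 g₁ g₂ x = ∞}
        ≤ ((a⁻¹) ^ k * ((∫⁻ x, g₁ x) * (∫⁻ x, g₂ x))) ^ (((2:ℝ) - α / n)⁻¹) := by
      intro k
      have h := weak_type (g₁ := g₁) (g₂ := g₂) hn hD hα0 hα hI₁ hI₂
        (hz0 (k:ℤ)) (hzt (k:ℤ))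
      rw [show ((a ^ (k:ℤ))⁻¹ = (a⁻¹) ^ k) by rw [zpow_natCast, ENNReal.inv_pow]] at h
      refine le_trans (measure_mono ?_) h
      intro x hx
      simp only [mem_setOf_eq] at hx ⊢
      rw [hx]
      exact ENNReal.zpow_lt_top ha0 hat _
    have h1 : Filter.Tendsto (fun k : ℕ => (a⁻¹) ^ k * ((∫⁻ x, g₁ x) * (∫⁻ x, g₂ x)))
        Filter.atTop (nhds 0) := by
      have h0 := ENNReal.tendsto_pow_atTop_nhds_zero_of_lt_one hinvlt
      have := ENNReal.Tendsto.mul_const h0 (Or.inr hIne)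
      simpa using this
    have h2 : Filter.Tendsto
        (fun k : ℕ => ((a⁻¹) ^ k * ((∫⁻ x, g₁ x) * (∫⁻ x, g₂ x))) ^ (((2:ℝ) - α / n)⁻¹))
        Filter.atTop (nhds 0) := by
      have := ((ENNReal.continuous_rpow_const (y := ((2:ℝ) - α / n)⁻¹)).tendsto 0).comp h1
      simpa [Function.comp_def, ENNReal.zero_rpow_of_pos (by positivity : (0:ℝ) < ((2:ℝ) - α / n)⁻¹)] using this
    exact le_antisymm (ge_of_tendsto h2 (Filter.Eventually.of_forall hle)) zero_le
  rw [MeasureTheory.ae_iff]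
  refine measure_mono_null ?_ hzero
  intro x hx
  simp only [mem_setOf_eq] at hx ⊢
  by_contra hfin
  apply hx
  intro hpos
  -- choose the largest k₀ with a^k₀ < M2D x
  have h0 := ENNReal.tendsto_pow_atTop_nhds_zero_of_lt_one hinvlt
  have hinh : ∃ k : ℤ, a ^ k < M2D n α 𝒟 g₁ g₂ x := by
    obtain ⟨j, hj⟩ := (h0.eventually_lt_const hpos).exists
    refine ⟨-(j:ℤ), ?_⟩
    rwa [ENNReal.zpow_neg, zpow_natCast, ENNReal.inv_pow]
  have hbdd : ∃ b : ℤ, ∀ k : ℤ, a ^ k < M2D n α 𝒟 g₁ g₂ x → k ≤ b := by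
    have hMinv : 0 < (M2D n α 𝒟 g₁ g₂ x)⁻¹ := ENNReal.inv_pos.2 hfin
    obtain ⟨N, hN⟩ := (h0.eventually_lt_const hMinv).exists
    have hMN : M2D n α 𝒟 g₁ g₂ x < a ^ (N:ℤ) := by
      rw [← ENNReal.inv_pow] at hN
      rw [zpow_natCast]
      exact ENNReal.inv_lt_inv.1 hN
    refine ⟨N, fun k hk => ?_⟩
    by_contra hcon
    push_neg at hcon
    have h2 : a ^ (N:ℤ) ≤ a ^ k := ENNReal.zpow_le_of_le ha1.le hcon.le
    exact absurd (hMN.trans_le h2) (not_lt.2 hk.le)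
  obtain ⟨k₀, hk₀, hk₀max⟩ := Int.exists_greatest_of_bdd hbdd hinh
  have hMle : M2D n α 𝒟 g₁ g₂ x ≤ a ^ (k₀ + 1) := by
    by_contra h
    push_neg at h
    have := hk₀max _ h
    omega
  constructor
  · -- LOWER BOUND
    obtain ⟨P, hPD, hxP, hPA⟩ := lt_M2D_iff.1 hk₀
    have hPsub : P ⊆ Ω k₀ :=
      afam_subset_Omega (α := α) (𝒟 := 𝒟) (g₁ := g₁) (g₂ := g₂) (lam := a ^ k₀) ⟨hPD, hPA⟩
    have hWne : (((a ^ k₀)⁻¹ * ((∫⁻ x, g₁ x) * (∫⁻ x, g₂ x)))) ^ (((2:ℝ) - α / n)⁻¹) ≠ ∞ :=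
      ENNReal.rpow_ne_top_of_nonneg (by positivity)
        (ENNReal.mul_ne_top (ENNReal.inv_ne_top.2 (hz0 k₀)) hIne)
    obtain ⟨Qs, hQsP, hPQs, hQsmax⟩ := grid_exists_maximal hn hD
      {R | R ∈ 𝒟 ∧ R ⊆ Ω k₀} (fun R hR => hR.1) ⟨hPD, hPsub⟩ hWne
      (fun R hR _ => le_trans (measure_mono hR.2)
        (weak_type hn hD hα0 hα hI₁ hI₂ (hz0 k₀) (hzt k₀)))
    have hQsS : Qs ∈ S k₀ := ⟨hQsP.1, hQsP.2, fun R hR hsub hRΩ => hQsmax R ⟨hR, hRΩ⟩ hsub⟩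
    have hxQs : x ∈ Qs := hPQs hxP
    have hlow : a ^ k₀ ≤ Afn n α g₁ g₂ Qs :=
      max_cube_lower hn hD hα0 hα hI₁ hI₂ (hz0 k₀) (hzt k₀) hQsP.1 hQsP.2
        (fun R hR hsub hRΩ => hQsmax R ⟨hR, hRΩ⟩ hsub)
    have hxnot : x ∉ Ω (k₀ + 1) := fun h => by have := hk₀max _ h; omega
    have hxE : x ∈ Qs \ Ω (k₀+1) := ⟨hxQs, hxnot⟩
    have hterm : (volume Qs ^ (α / (n:ℝ) - 2) *
          (∫⁻ y in Qs, g₁ y) * (∫⁻ y in Qs, g₂ y)) *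
          ((Qs \ Ω (k₀+1)).indicator (fun _ => (1:ℝ≥0∞)) x) ≤ T x := by
      refine le_trans ?_ (ENNReal.le_tsum k₀)
      exact ENNReal.le_tsum (⟨Qs, hQsS⟩ : ↥(S k₀))
    calc ((2:ℝ≥0∞) ^ (((2:ℝ) - α / n) * ((n:ℝ) + 1)))⁻¹ * M2D n α 𝒟 g₁ g₂ x
        = a⁻¹ * M2D n α 𝒟 g₁ g₂ x := rfl
      _ ≤ a⁻¹ * a ^ (k₀ + 1) := by gcongr
      _ = a ^ k₀ := by
          rw [ENNReal.zpow_add ha0 hat k₀ 1, zpow_one, mul_comm (a ^ k₀) a, ← mul_assoc,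
            ENNReal.inv_mul_cancel ha0 hat, one_mul]
      _ ≤ Afn n α g₁ g₂ Qs := hlow
      _ = (volume Qs ^ (α / (n:ℝ) - 2) *
            (∫⁻ y in Qs, g₁ y) * (∫⁻ y in Qs, g₂ y)) *
            ((Qs \ Ω (k₀+1)).indicator (fun _ => (1:ℝ≥0∞)) x) := by
          rw [Set.indicator_of_mem hxE, mul_one, Afn_eq hn hD hQsP.1]
      _ ≤ T x := hterm
  · -- UPPER BOUND
    rw [one_mul]
    have hvanish : ∀ k : ℤ, k ≠ k₀ →
        (∑' (Q : ↥(S k)), (volume (Q : Set (Rn n)) ^ (α / (n:ℝ) - 2) *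
            (∫⁻ y in (Q : Set (Rn n)), g₁ y) * (∫⁻ y in (Q : Set (Rn n)), g₂ y)) *
            ((Q : Set (Rn n)) \ Ω (k+1)).indicator (fun _ => (1:ℝ≥0∞)) x) = 0 := by
      intro k hk
      refine ENNReal.tsum_eq_zero.2 fun Q => ?_
      rcases em (x ∈ (Q : Set (Rn n)) \ Ω (k+1)) with hmem | hmem
      · exfalso
        obtain ⟨hxQ, hxΩ⟩ := hmem
        have h1 : a ^ k < M2D n α 𝒟 g₁ g₂ x := Q.2.2.1 hxQ
        have h2 : M2D n α 𝒟 g₁ g₂ x ≤ a ^ (k+1) := not_lt.1 hxΩ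
        have hkk : k ≤ k₀ := hk₀max k h1
        have hcc : k₀ < k + 1 := by
          by_contra hcon
          push_neg at hcon
          have h3 : a ^ (k+1) ≤ a ^ k₀ := ENNReal.zpow_le_of_le ha1.le hcon
          exact absurd hk₀ (not_lt.2 (h2.trans h3))
        omega
      · rw [Set.indicator_of_notMem hmem, mul_zero]
    have hTx : T x = ∑' (Q : ↥(S k₀)), (volume (Q : Set (Rn n)) ^ (α / (n:ℝ) - 2) *
            (∫⁻ y in (Q : Set (Rn n)), g₁ y) * (∫⁻ y in (Q : Set (Rn n)), g₂ y)) *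
            ((Q : Set (Rn n)) \ Ω (k₀+1)).indicator (fun _ => (1:ℝ≥0∞)) x :=
      tsum_eq_single k₀ hvanish
    rw [hTx]
    by_cases hex : ∃ Q : Set (Rn n), ∃ _ : Q ∈ S k₀, x ∈ Q
    · obtain ⟨Q₀, hQ₀S, hxQ₀⟩ := hex
      have hsingle : ∀ (Q : ↥(S k₀)), Q ≠ ⟨Q₀, hQ₀S⟩ →
          (volume (Q : Set (Rn n)) ^ (α / (n:ℝ) - 2) *
            (∫⁻ y in (Q : Set (Rn n)), g₁ y) * (∫⁻ y in (Q : Set (Rn n)), g₂ y)) *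
            ((Q : Set (Rn n)) \ Ω (k₀+1)).indicator (fun _ => (1:ℝ≥0∞)) x = 0 := by
        intro Q hne
        rcases em (x ∈ (Q : Set (Rn n)) \ Ω (k₀+1)) with hmem | hmem
        · exfalso
          have hxQ := hmem.1
          have hQne : (Q : Set (Rn n)) ≠ Q₀ := fun h => hne (Subtype.ext h)
          rcases grid_nested hD Q.2.1 hQ₀S.1 hxQ hxQ₀ with h | h
          · exact hQne (Q.2.2.2 Q₀ hQ₀S.1 h hQ₀S.2.1).symm
          · exact hQne (hQ₀S.2.2 Q Q.2.1 h Q.2.2.1)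
        · rw [Set.indicator_of_notMem hmem, mul_zero]
      rw [tsum_eq_single (⟨Q₀, hQ₀S⟩ : ↥(S k₀)) hsingle]
      calc (volume Q₀ ^ (α / (n:ℝ) - 2) *
            (∫⁻ y in Q₀, g₁ y) * (∫⁻ y in Q₀, g₂ y)) *
            ((Q₀ \ Ω (k₀+1)).indicator (fun _ => (1:ℝ≥0∞)) x)
          ≤ (volume Q₀ ^ (α / (n:ℝ) - 2) *
            (∫⁻ y in Q₀, g₁ y) * (∫⁻ y in Q₀, g₂ y)) * 1 := by
            gcongr
            rcases em (x ∈ Q₀ \ Ω (k₀+1)) with hmem | hmem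
            · rw [Set.indicator_of_mem hmem]
            · rw [Set.indicator_of_notMem hmem]; exact zero_le_one
        _ = Afn n α g₁ g₂ Q₀ := by rw [mul_one, ← Afn_eq hn hD hQ₀S.1]
        _ ≤ M2D n α 𝒟 g₁ g₂ x := Afn_le_M2D hQ₀S.1 hxQ₀
    · push_neg at hex
      have : ∀ (Q : ↥(S k₀)), (volume (Q : Set (Rn n)) ^ (α / (n:ℝ) - 2) *
            (∫⁻ y in (Q : Set (Rn n)), g₁ y) * (∫⁻ y in (Q : Set (Rn n)), g₂ y)) *
            ((Q : Set (Rn n)) \ Ω (k₀+1)).indicator (fun _ => (1:ℝ≥0∞)) x = 0 := by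
        intro Q
        rw [Set.indicator_of_notMem (fun hmem => hex Q Q.2 hmem.1), mul_zero]
      rw [ENNReal.tsum_eq_zero.2 this]
      exact zero_le
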